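/- Let 𝒜 be a finite subset of SL(2,ℝ) that is uniformly hyperbolic. Then every matrix in the generated semigroup 𝒜* is hyperbolic, i.e. |tr(A)| > 2 for every A ∈ 𝒜*. -/

import Mathlib

open Matrix

abbrev SL2 := Matrix.SpecialLinearGroup (Fin 2) ℝ

/-- The operator norm of a 2x2 real matrix, acting on Euclidean `ℝ²`. -/
noncomputable def matNorm (A : Matrix (Fin 2) (Fin 2) ℝ) : ℝ :=
  ‖LinearMap.toContinuousLinearMap (Matrix.toEuclideanLin A)‖

instance : TopologicalSpace SL2 :=
  TopologicalSpace.induced (fun A => (A : Matrix (Fin 2) (Fin 2) ℝ)) inferInstance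

/-- Product of the word `l` under the letter assignment `A`. -/
def wordProd {ι : Type*} (A : ι → SL2) (l : List ι) : SL2 := (l.map A).prod

/-- The zeta function `ζ_𝒜(s) = ∑_{n≥1} ∑_{A ∈ 𝒜ⁿ} ‖A‖^{-2s}`, the sum ranging over all
nonempty words over the alphabet `ι` (valued in `ℝ≥0∞` so divergence is value `⊤`). -/
noncomputable def zeta {ι : Type*} (A : ι → SL2) (s : ℝ) : ENNReal :=
  ∑' l : {l : List ι // l ≠ []}, ENNReal.ofReal (matNorm (wordProd A l.1) ^ (-2 * s))

/-- The critical exponent `δ_𝒜 = inf {s > 0 : ζ_𝒜(s) < ∞}` (equal to `⊤` if the zeta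
function always diverges). -/
noncomputable def deltaOf {ι : Type*} (A : ι → SL2) : ENNReal :=
  ⨅ s : {s : ℝ // 0 < s ∧ zeta A s < ⊤}, ENNReal.ofReal s.1

lemma mem_closure_exists (S : Set SL2) {A : SL2} (h : A ∈ Subsemigroup.closure S) :
    ∃ l : List SL2, l ≠ [] ∧ (∀ x ∈ l, x ∈ S) ∧ l.prod = A := by
  induction h using Subsemigroup.closure_induction with
  | mem x hx => exact ⟨[x], by simp, by simpa, by simp⟩
  | mul x y hx hy ihx ihy =>
    obtain ⟨l1, h1, h1S, h1p⟩ := ihx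
    obtain ⟨l2, h2, h2S, h2p⟩ := ihy
    refine ⟨l1 ++ l2, by simp [h1], ?_, by simp [h1p, h2p]⟩
    intro x hx; rcases List.mem_append.1 hx with h | h
    · exact h1S x h
    · exact h2S x h

noncomputable def cheb (t : ℝ) : ℕ → ℝ
  | 0 => 0
  | 1 => 1
  | (n+2) => t * cheb t (n+1) - cheb t n

lemma cheb_inv (t : ℝ) (ht : |t| ≤ 2) : ∀ n : ℕ,
    |cheb t n| ≤ n ∧
    (cheb t n)^2 - t * cheb t n * cheb t (n+1) + (cheb t (n+1))^2 = 1 := by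
  intro n
  induction n with
  | zero => constructor <;> simp [cheb]
  | succ n ih =>
    obtain ⟨hb, hq⟩ := ih
    have habs : t * (cheb t n * cheb t (n+1)) ≤ 2 * (|cheb t n| * |cheb t (n+1)|) := by
      calc t * (cheb t n * cheb t (n+1)) ≤ |t * (cheb t n * cheb t (n+1))| := le_abs_self _
        _ = |t| * (|cheb t n| * |cheb t (n+1)|) := by rw [abs_mul, abs_mul]
        _ ≤ 2 * (|cheb t n| * |cheb t (n+1)|) := by
            apply mul_le_mul_of_nonneg_right ht (by positivity)
    have hsq : (|cheb t (n+1)| - |cheb t n|)^2 ≤ 1 := by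
      have e1 : |cheb t (n+1)|^2 = (cheb t (n+1))^2 := sq_abs _
      have e0 : |cheb t n|^2 = (cheb t n)^2 := sq_abs _
      nlinarith
    have hstep : |cheb t (n+1)| ≤ |cheb t n| + 1 := by nlinarith [abs_nonneg (cheb t n), abs_nonneg (cheb t (n+1))]
    constructor
    · calc |cheb t (n+1)| ≤ |cheb t n| + 1 := hstep
        _ ≤ n + 1 := by linarith
        _ = ((n+1 : ℕ) : ℝ) := by push_cast; ring
    · show (cheb t (n+1))^2 - t * cheb t (n+1) * cheb t (n+2) + (cheb t (n+2))^2 = 1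
      have : cheb t (n+2) = t * cheb t (n+1) - cheb t n := rfl
      rw [this]; nlinarith [hq]

lemma sq_eq (M : Matrix (Fin 2) (Fin 2) ℝ) (h : M.det = 1) :
    M * M = M.trace • M - 1 := by
  have hd := h
  rw [Matrix.det_fin_two] at hd
  ext i j
  fin_cases i <;> fin_cases j <;>
    simp [Matrix.mul_apply, Fin.sum_univ_two, Matrix.trace_fin_two, Matrix.one_apply] <;> ring_nf <;> nlinarith [hd]

lemma pow_formula (M : Matrix (Fin 2) (Fin 2) ℝ) (h : M.det = 1) : ∀ n : ℕ,
    M ^ (n+1) = cheb M.trace (n+1) • M - cheb M.trace n • (1 : Matrix (Fin 2) (Fin 2) ℝ) := by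
  intro n
  induction n with
  | zero => simp [cheb]
  | succ n ih =>
    have : M ^ (n+2) = M ^ (n+1) * M := by rw [pow_succ]
    rw [this, ih, sub_mul, smul_mul_assoc, smul_mul_assoc, sq_eq M h, one_mul]
    have : cheb M.trace (n+2) = M.trace * cheb M.trace (n+1) - cheb M.trace n := rfl
    rw [this]
    rw [smul_sub, smul_smul]
    module

lemma matNorm_nonneg (M : Matrix (Fin 2) (Fin 2) ℝ) : 0 ≤ matNorm M := norm_nonneg _

lemma matNorm_sub_le (M N : Matrix (Fin 2) (Fin 2) ℝ) :
    matNorm (M - N) ≤ matNorm M + matNorm N := by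
  unfold matNorm
  rw [map_sub, map_sub]
  exact norm_sub_le _ _

lemma matNorm_smul (a : ℝ) (M : Matrix (Fin 2) (Fin 2) ℝ) :
    matNorm (a • M) = |a| * matNorm M := by
  unfold matNorm
  rw [_root_.map_smul, _root_.map_smul]
  rw [norm_smul a (LinearMap.toContinuousLinearMap (Matrix.toEuclideanLin M)), Real.norm_eq_abs]

lemma matNorm_one : matNorm (1 : Matrix (Fin 2) (Fin 2) ℝ) = 1 := by
  unfold matNorm
  have : Matrix.toEuclideanLin (1 : Matrix (Fin 2) (Fin 2) ℝ) = LinearMap.id := by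
    simp [Matrix.toEuclideanLin_eq_toLin, Matrix.toLin_one]
  rw [this]
  have : (LinearMap.toContinuousLinearMap (LinearMap.id : EuclideanSpace ℝ (Fin 2) →ₗ[ℝ] EuclideanSpace ℝ (Fin 2))) = ContinuousLinearMap.id ℝ _ := by
    ext x; rfl
  rw [this]
  exact ContinuousLinearMap.norm_id

/-- Every element of the semigroup generated by a finite uniformly hyperbolic set
`𝒜 ⊆ SL(2,ℝ)` is hyperbolic: `|tr A| > 2`. -/
theorem stmt8 (S : Set SL2) (hfin : S.Finite)
    (huh : ∃ lam : ℝ, 1 < lam ∧ ∃ c : ℝ, 0 < c ∧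
      ∀ l : List SL2, l ≠ [] → (∀ x ∈ l, x ∈ S) →
        matNorm ((l.prod : SL2) : Matrix (Fin 2) (Fin 2) ℝ) ≥ c * lam ^ l.length) :
    ∀ A : SL2, A ∈ Subsemigroup.closure S →
      |Matrix.trace ((A : SL2) : Matrix (Fin 2) (Fin 2) ℝ)| > 2 := by
  obtain ⟨lam, hlam, c, hc, hbound⟩ := huh
  intro A hA
  by_contra hle
  push_neg at hle
  obtain ⟨l, hne, hS, hprod⟩ := mem_closure_exists S hA
  set M : Matrix (Fin 2) (Fin 2) ℝ := ((A : SL2) : Matrix (Fin 2) (Fin 2) ℝ) with hM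
  have hdet : M.det = 1 := A.property
  have hm : 1 ≤ l.length := List.length_pos_iff.2 hne
  set t := M.trace with hT
  have ht : |t| ≤ 2 := hle
  set K : ℝ := matNorm M + 1 with hKdef
  have hK : 0 < K := by have := matNorm_nonneg M; simp [hKdef]; linarith
  have key : ∀ n : ℕ, matNorm (M ^ (n+1)) ≤ (n+1) * K := by
    intro n
    rw [pow_formula M hdet n]
    have h1 := (cheb_inv t ht (n+1)).1
    have h2 := (cheb_inv t ht n).1
    have h0 := matNorm_nonneg M
    have habs1 := abs_nonneg (cheb t (n+1))
    have habs2 := abs_nonneg (cheb t n)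
    calc matNorm _ ≤ matNorm (cheb t (n+1) • M) + matNorm (cheb t n • (1:Matrix (Fin 2) (Fin 2) ℝ)) :=
          matNorm_sub_le _ _
      _ = |cheb t (n+1)| * matNorm M + |cheb t n| * 1 := by
          rw [matNorm_smul, matNorm_smul, matNorm_one]
      _ ≤ (n+1) * matNorm M + (n+1) * 1 := by
          push_cast at h1 h2 ⊢
          have : |cheb t n| ≤ (n:ℝ)+1 := by linarith
          gcongr
      _ = (n+1) * K := by rw [hKdef]; ring
  have lower : ∀ n : ℕ, c * lam ^ (n+1) ≤ matNorm (M ^ (n+1)) := by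
    intro n
    set l' : List SL2 := (List.replicate (n+1) l).flatten with hl'
    have hne' : l' ≠ [] := by
      simp only [hl', ne_eq, List.flatten_eq_nil_iff]
      intro h
      exact hne (h l (List.mem_replicate.2 ⟨by omega, rfl⟩))
    have hS' : ∀ x ∈ l', x ∈ S := by
      intro x hx
      rw [hl', List.mem_flatten] at hx
      obtain ⟨L, hL, hxL⟩ := hx
      rw [List.eq_of_mem_replicate hL] at hxL
      exact hS x hxL
    have hlen : l'.length = (n+1) * l.length := by
      simp [hl', List.length_flatten, List.map_replicate, List.sum_replicate, smul_eq_mul]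
    have hprod' : (l'.prod : Matrix (Fin 2) (Fin 2) ℝ) = M ^ (n+1) := by
      rw [hl', List.prod_flatten, List.map_replicate, List.prod_replicate, hprod, hM]
      exact Matrix.SpecialLinearGroup.coe_pow A (n+1)
    have h := hbound l' hne' hS'
    rw [hprod', hlen] at h
    calc c * lam ^ (n+1) ≤ c * lam ^ ((n+1) * l.length) := by
          apply mul_le_mul_of_nonneg_left _ hc.le
          exact pow_le_pow_right₀ hlam.le (Nat.le_mul_of_pos_right (n+1) (by omega))
      _ ≤ matNorm (M ^ (n+1)) := h
  have main : ∀ n : ℕ, c * lam ^ (n+1) ≤ (n+1) * K := fun n => (lower n).trans (key n)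
  -- choose k large
  have hpos : (0:ℝ) < 2 * K / (c * (lam - 1)^2) := by
    apply div_pos (by linarith) (mul_pos hc (pow_pos (by linarith) 2))
  obtain ⟨k, hk⟩ := exists_nat_gt (2 * K / (c * (lam - 1)^2))
  have hk1 : 1 ≤ k := by
    by_contra h
    push_neg at h
    interval_cases k
    simp at hk
    linarith
  have hck : 2 * K < (k:ℝ) * (c * (lam - 1)^2) := by
    rw [div_lt_iff₀ (mul_pos hc (pow_pos (by linarith) 2))] at hk
    exact hk
  have hbern : (k:ℝ) * (lam - 1) ≤ lam ^ k := by
    have := one_add_mul_le_pow (a := lam - 1) (by linarith) k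
    have h2 : 1 + (k:ℝ) * (lam - 1) ≤ lam ^ k := by
      calc 1 + (k:ℝ) * (lam - 1) ≤ (1 + (lam - 1)) ^ k := this
        _ = lam ^ k := by ring
    linarith
  have hsq : (k:ℝ)^2 * (lam - 1)^2 ≤ lam ^ (2*k) := by
    have hnn : 0 ≤ (k:ℝ) * (lam - 1) := mul_nonneg (Nat.cast_nonneg k) (by linarith)
    calc (k:ℝ)^2 * (lam - 1)^2 = ((k:ℝ) * (lam - 1))^2 := by ring
      _ ≤ (lam ^ k)^2 := by apply pow_le_pow_left₀ hnn hbern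
      _ = lam ^ (2*k) := by rw [← pow_mul]; ring_nf
  have hmain := main (2*k - 1)
  have h2k : 2*k - 1 + 1 = 2*k := by omega
  rw [h2k] at hmain
  have hkr : (1:ℝ) ≤ (k:ℝ) := by exact_mod_cast hk1
  have hcast : ((2*k - 1 : ℕ) : ℝ) + 1 = 2 * (k:ℝ) := by
    rw [show ((2*k-1:ℕ):ℝ) + 1 = ((2*k-1+1 : ℕ):ℝ) by push_cast; ring, h2k]
    push_cast; ring
  rw [hcast] at hmain
  have hkpos : (0:ℝ) < k := by linarith
  nlinarith [mul_lt_mul_of_pos_left hck hkpos, mul_le_mul_of_nonneg_left hsq hc.le, hmain]
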